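/- For every integer m ≥ 0, ∫₀^π θ sin θ cos^m θ dθ = (√π / (2(m+1))) · (Γ(m/2 + 1)/Γ(m/2 + 3/2)) · (1 − (−1)^m) − (π/(m+1)) · (−1)^{m+1}. -/

import Mathlib

open Real intervalIntegral

lemma cos_pow_odd_int (k : ℕ) : ∫ x in (0:ℝ)..π, Real.cos x ^ (2*k+1) = 0 := by
  induction k with
  | zero => simp
  | succ n ih =>
    have : 2*(n+1)+1 = (2*n+1) + 2 := by ring
    rw [this, integral_cos_pow, ih]
    simp

lemma cos_pow_even_int (k : ℕ) : ∫ x in (0:ℝ)..π, Real.cos x ^ (2*k)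
    = Real.sqrt π * (Real.Gamma (k + 1/2) / Real.Gamma (k + 1)) := by
  induction k with
  | zero =>
    simp only [Nat.mul_zero, pow_zero, Nat.cast_zero, zero_add]
    rw [Real.Gamma_one, Real.Gamma_one_half_eq, div_one, Real.mul_self_sqrt Real.pi_pos.le]
    simp
  | succ n ih =>
    have h1 : 2*(n+1) = (2*n) + 2 := by ring
    rw [h1, integral_cos_pow, ih]
    have hg1 : Real.Gamma ((n:ℝ) + 1 + 1/2) = ((n:ℝ)+1/2) * Real.Gamma (n + 1/2) := by
      have := Real.Gamma_add_one (s := (n:ℝ) + 1/2) (by positivity)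
      rw [show (n:ℝ) + 1 + 1/2 = (n:ℝ) + 1/2 + 1 by ring, this]
    have hg2 : Real.Gamma ((n:ℝ) + 1 + 1) = ((n:ℝ)+1) * Real.Gamma (n + 1) := by
      have := Real.Gamma_add_one (s := (n:ℝ) + 1) (by positivity)
      rw [this]
    have hne1 : Real.Gamma ((n:ℝ) + 1) ≠ 0 := (Real.Gamma_pos_of_pos (by positivity)).ne'
    push_cast
    rw [hg1, hg2]
    have hne2 : (n:ℝ) + 1 ≠ 0 := by positivity
    field_simp
    simp only [Real.sin_pi, Real.sin_zero, mul_zero, zero_mul, sub_zero, zero_add]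

lemma ibp (m : ℕ) : ∫ θ in (0:ℝ)..π, θ * Real.sin θ * Real.cos θ ^ m
    = π * (-1:ℝ)^m / (m+1) + (1/(m+1)) * ∫ x in (0:ℝ)..π, Real.cos x ^ (m+1) := by
  have hm : ((m:ℝ)+1) ≠ 0 := by positivity
  have hv : ∀ x ∈ Set.uIcc (0:ℝ) π,
      HasDerivAt (fun y => -Real.cos y ^ (m+1) / (m+1)) (Real.sin x * Real.cos x ^ m) x := by
    intro x _
    have h := ((Real.hasDerivAt_cos x).pow (m+1)).neg.div_const ((m:ℝ)+1)
    refine h.congr_deriv ?_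
    push_cast
    field_simp
  have hu : ∀ x ∈ Set.uIcc (0:ℝ) π, HasDerivAt (fun y : ℝ => y) (1:ℝ) x :=
    fun x _ => hasDerivAt_id x
  have H := integral_mul_deriv_eq_deriv_mul hu hv
    (continuous_const.intervalIntegrable _ _)
    (((Real.continuous_sin.mul (Real.continuous_cos.pow m))).intervalIntegrable _ _)
  simp only [mul_assoc]
  rw [H]
  have : ∫ x in (0:ℝ)..π, 1 * (-Real.cos x ^ (m+1) / (m+1))
      = -(1/((m:ℝ)+1)) * ∫ x in (0:ℝ)..π, Real.cos x ^ (m+1) := by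
    rw [← intervalIntegral.integral_const_mul]
    congr 1; ext x; ring
  rw [this]
  simp [Real.cos_pi]
  ring_nf

theorem stmt_4 (m : ℕ) :
    ∫ θ in (0:ℝ)..Real.pi, θ * Real.sin θ * Real.cos θ ^ m
      = Real.sqrt Real.pi / (2 * (m + 1)) *
          (Real.Gamma ((m : ℝ) / 2 + 1) / Real.Gamma ((m : ℝ) / 2 + 3 / 2)) *
          (1 - (-1 : ℝ) ^ m)
        - Real.pi / (m + 1) * (-1 : ℝ) ^ (m + 1) := by
  rw [ibp]
  rcases Nat.even_or_odd m with ⟨k, hk⟩ | ⟨k, hk⟩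
  · subst hk
    rw [show k + k = 2*k from (two_mul k).symm, cos_pow_odd_int]
    rw [show (-1:ℝ)^(2*k) = 1 by simp [pow_mul]]
    rw [show (-1:ℝ)^(2*k+1) = -1 by simp [pow_succ, pow_mul]]
    push_cast
    ring
  · subst hk
    rw [show 2*k + 1 + 1 = 2*(k+1) by ring, cos_pow_even_int]
    rw [show (-1:ℝ)^(2*k+1) = -1 by simp [pow_succ, pow_mul]]
    rw [show (-1:ℝ)^(2*(k+1)) = 1 by simp [pow_succ, pow_mul]]
    push_cast
    have e1 : (2*(k:ℝ)+1)/2 + 1 = (k:ℝ) + 1 + 1/2 := by ring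
    have e2 : (2*(k:ℝ)+1)/2 + 3/2 = (k:ℝ) + 1 + 1 := by ring
    rw [e1, e2]
    have hne1 : Real.Gamma ((k:ℝ) + 1 + 1) ≠ 0 := (Real.Gamma_pos_of_pos (by positivity)).ne'
    have hne2 : 2*(k:ℝ) + 1 + 1 ≠ 0 := by positivity
    field_simp
    ring
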